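/- If d ≥ n+1, then the free ℚ-vector space 𝒫 is spanned by the union of ker(φ) and the set of basis elements (S,T) that are disconnected or have a multiple edge; that is, the ℚ-linear span of {(S,T) : (S,T) is disconnected or has a multiple edge} ∪ ker(φ) equals all of 𝒫. -/

import Mathlib

noncomputable section

open Finset

/-- A filling: a `d × n` tableau filled bijectively with the labels `1, …, dn`
(first index = row). -/
abbrev Filling (n d : ℕ) := (Fin d × Fin n) ≃ Fin (d * n)

/-- The free `ℚ`-vector space `𝒫` on the set of pairs of fillings. -/
abbrev PSpace (n d : ℕ) := (Filling n d × Filling n d) →₀ ℚ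

/-- The multilinear function associated to a pair of fillings `(S, T)`:
`φ(S,T)(v,w) = ∏ᵢ det[v_{S(i,1)} | ⋯ | v_{S(i,n)}] · ∏ⱼ det[w_{T(j,1)} | ⋯ | w_{T(j,n)}]`. -/
def phiFun (n d : ℕ) (ST : Filling n d × Filling n d)
    (vw : Fin (d * n) → (Fin n → ℚ) × (Fin n → ℚ)) : ℚ :=
  (∏ i : Fin d, (Matrix.of fun r c : Fin n => (vw (ST.1 (i, c))).1 r).det) *
  (∏ j : Fin d, (Matrix.of fun r c : Fin n => (vw (ST.2 (j, c))).2 r).det)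

/-- The linear extension `φ : 𝒫 → (((ℚⁿ × ℚⁿ)^{dn}) → ℚ)`. -/
def phi (n d : ℕ) :
    PSpace n d →ₗ[ℚ] ((Fin (d * n) → (Fin n → ℚ) × (Fin n → ℚ)) → ℚ) :=
  Finsupp.linearCombination ℚ (phiFun n d)

/-- The bipartite graph of a pair of fillings `(S, T)`: left vertex `i` is adjacent to right
vertex `j` iff some label `k` occurs both in row `i` of `S` and in row `j` of `T`. -/
def graphOf (n d : ℕ) (ST : Filling n d × Filling n d) : SimpleGraph (Fin d ⊕ Fin d) :=
  SimpleGraph.fromRel (fun a b => ∃ i j : Fin d, a = Sum.inl i ∧ b = Sum.inr j ∧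
    ∃ k : Fin (d * n), (ST.1.symm k).1 = i ∧ (ST.2.symm k).1 = j)

/-- `(S, T)` is disconnected if its bipartite graph is not connected. -/
def IsDisconnected (n d : ℕ) (ST : Filling n d × Filling n d) : Prop :=
  ¬ (graphOf n d ST).Connected

/-- `(S, T)` has a multiple edge if two distinct labels occur in the same row of `S` and
the same row of `T`. -/
def HasMultipleEdge (n d : ℕ) (ST : Filling n d × Filling n d) : Prop :=
  ∃ k k' : Fin (d * n), k ≠ k' ∧ (ST.1.symm k).1 = (ST.1.symm k').1 ∧
    (ST.2.symm k).1 = (ST.2.symm k').1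

namespace Aux

def sgnQ {α : Type*} [DecidableEq α] [Fintype α] (π : Equiv.Perm α) : ℚ :=
  ((Equiv.Perm.sign π : ℤ) : ℚ)

lemma sgnQ_mul {α : Type*} [DecidableEq α] [Fintype α] (π ρ : Equiv.Perm α) :
    sgnQ (π * ρ) = sgnQ π * sgnQ ρ := by
  simp [sgnQ]

lemma sgnQ_mul_self {α : Type*} [DecidableEq α] [Fintype α] (π : Equiv.Perm α) :
    sgnQ π * sgnQ π = 1 := by
  simp [sgnQ, ← Int.cast_mul, ← Units.val_mul]

lemma sgnQ_one {α : Type*} [DecidableEq α] [Fintype α] :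
    sgnQ (1 : Equiv.Perm α) = 1 := by simp [sgnQ]

variable (n d : ℕ)

/-- The submodule generated by special basis elements and the kernel. -/
def MM : Submodule ℚ (PSpace n d) := Submodule.span ℚ
      ({x : PSpace n d | ∃ ST : Filling n d × Filling n d,
          (IsDisconnected n d ST ∨ HasMultipleEdge n d ST) ∧ x = Finsupp.single ST 1}
        ∪ (LinearMap.ker (phi n d) : Set (PSpace n d)))

lemma ker_mem_MM {x : PSpace n d} (h : x ∈ LinearMap.ker (phi n d)) : x ∈ MM n d :=
  Submodule.subset_span (Set.mem_union_right _ h)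

lemma special_mem_MM {ST : Filling n d × Filling n d}
    (h : IsDisconnected n d ST ∨ HasMultipleEdge n d ST) :
    Finsupp.single ST (1:ℚ) ∈ MM n d :=
  Submodule.subset_span (Set.mem_union_left _ ⟨ST, h, rfl⟩)

def gfun (U : Filling n d) (u : Fin (d * n) → Fin n → ℚ) : ℚ :=
  ∏ i : Fin d, (Matrix.of fun r c : Fin n => u (U (i, c)) r).det

lemma phiFun_eq (S T : Filling n d) (vw : Fin (d * n) → (Fin n → ℚ) × (Fin n → ℚ)) :
    phiFun n d (S, T) vw = gfun n d S (fun k => (vw k).1) * gfun n d T (fun k => (vw k).2) :=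
  rfl

lemma phi_single (ST : Filling n d × Filling n d) :
    phi n d (Finsupp.single ST (1:ℚ)) = phiFun n d ST := by
  simp [phi, Finsupp.linearCombination_single]

lemma gfun_expand (U : Filling n d) (u : Fin (d * n) → Fin n → ℚ) :
    gfun n d U u = ∑ ρ : Fin d → Equiv.Perm (Fin n),
      (∏ i, sgnQ (ρ i)) * ∏ x : Fin d × Fin n, u (U x) (ρ x.1 x.2) := by
  unfold gfun
  rw [Finset.prod_congr rfl (fun i _ => Matrix.det_apply' _)]
  rw [← Fintype.piFinset_univ, Finset.prod_univ_sum]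
  refine Finset.sum_congr rfl (fun ρ _ => ?_)
  rw [Finset.prod_mul_distrib]
  congr 1
  rw [Fintype.prod_prod_type]
  exact Finset.prod_congr rfl fun i _ => Finset.prod_congr rfl fun c _ => rfl

/-- The master antisymmetrization identity: the full sign-weighted relabeling sum is in the
kernel of φ, because `d*n > n*n`. -/
lemma master (S T : Filling n d) (hdn : n * n < d * n) :
    (∑ π : Equiv.Perm (Fin (d * n)), sgnQ π • Finsupp.single (S.trans π, T.trans π) (1:ℚ))
      ∈ LinearMap.ker (phi n d) := by
  rw [LinearMap.mem_ker, map_sum]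
  have h1 : ∀ π : Equiv.Perm (Fin (d * n)),
      phi n d (sgnQ π • Finsupp.single (S.trans π, T.trans π) (1:ℚ))
        = sgnQ π • phiFun n d (S.trans π, T.trans π) := by
    intro π; rw [map_smul, phi_single]
  rw [Finset.sum_congr rfl (fun π _ => h1 π)]
  funext vw
  simp only [Finset.sum_apply, Pi.smul_apply, smul_eq_mul, Pi.zero_apply]
  have hφ : ∀ π : Equiv.Perm (Fin (d * n)), phiFun n d (S.trans π, T.trans π) vw
      = gfun n d S (fun k => (vw (π k)).1) * gfun n d T (fun k => (vw (π k)).2) := fun π => rfl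
  calc ∑ π : Equiv.Perm (Fin (d * n)), sgnQ π * phiFun n d (S.trans π, T.trans π) vw
      = ∑ π : Equiv.Perm (Fin (d * n)), ∑ ρ : Fin d → Equiv.Perm (Fin n),
          ∑ σ : Fin d → Equiv.Perm (Fin n),
          sgnQ π * (((∏ i, sgnQ (ρ i)) * ∏ x : Fin d × Fin n, (vw (π (S x))).1 (ρ x.1 x.2)) *
            ((∏ i, sgnQ (σ i)) * ∏ x : Fin d × Fin n, (vw (π (T x))).2 (σ x.1 x.2))) := by
        refine Finset.sum_congr rfl (fun π _ => ?_)
        rw [hφ π, gfun_expand, gfun_expand, Finset.sum_mul_sum, Finset.mul_sum]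
        refine Finset.sum_congr rfl (fun ρ _ => ?_)
        rw [Finset.mul_sum]
    _ = ∑ ρ : Fin d → Equiv.Perm (Fin n), ∑ σ : Fin d → Equiv.Perm (Fin n),
          ∑ π : Equiv.Perm (Fin (d * n)),
          sgnQ π * (((∏ i, sgnQ (ρ i)) * ∏ x : Fin d × Fin n, (vw (π (S x))).1 (ρ x.1 x.2)) *
            ((∏ i, sgnQ (σ i)) * ∏ x : Fin d × Fin n, (vw (π (T x))).2 (σ x.1 x.2))) := by
        rw [Finset.sum_comm]
        refine Finset.sum_congr rfl (fun ρ _ => Finset.sum_comm)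
    _ = 0 := by
        refine Finset.sum_eq_zero (fun ρ _ => Finset.sum_eq_zero (fun σ _ => ?_))
        -- inner sum over π is a determinant with two equal columns
        set fρ : Fin (d * n) → Fin n := fun k => ρ (S.symm k).1 (S.symm k).2 with hfρ
        set gσ : Fin (d * n) → Fin n := fun k => σ (T.symm k).1 (T.symm k).2 with hgσ
        have hcard : Fintype.card (Fin n × Fin n) < Fintype.card (Fin (d * n)) := by
          simpa using hdn
        obtain ⟨k₁, k₂, hne, heq⟩ :=
          Fintype.exists_ne_map_eq_of_card_lt (fun k => (fρ k, gσ k)) hcard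
        have key : ∑ π : Equiv.Perm (Fin (d * n)),
            sgnQ π * ∏ k, ((vw (π k)).1 (fρ k) * (vw (π k)).2 (gσ k)) = 0 := by
          have : (Matrix.of fun m k : Fin (d * n) =>
              ((vw m).1 (fρ k) * (vw m).2 (gσ k))).det = 0 := by
            apply Matrix.det_zero_of_column_eq hne
            intro m
            simp only [Matrix.of_apply]
            rw [(Prod.mk.injEq _ _ _ _ |>.mp heq).1, (Prod.mk.injEq _ _ _ _ |>.mp heq).2]
          rw [Matrix.det_apply'] at this
          convert this using 2 with π
          rfl
        calc ∑ π : Equiv.Perm (Fin (d * n)),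
              sgnQ π * (((∏ i, sgnQ (ρ i)) * ∏ x : Fin d × Fin n, (vw (π (S x))).1 (ρ x.1 x.2)) *
                ((∏ i, sgnQ (σ i)) * ∏ x : Fin d × Fin n, (vw (π (T x))).2 (σ x.1 x.2)))
            = ((∏ i, sgnQ (ρ i)) * (∏ i, sgnQ (σ i))) * ∑ π : Equiv.Perm (Fin (d * n)),
                sgnQ π * ∏ k, ((vw (π k)).1 (fρ k) * (vw (π k)).2 (gσ k)) := by
              rw [Finset.mul_sum]
              refine Finset.sum_congr rfl (fun π _ => ?_)
              have e1 : ∏ x : Fin d × Fin n, (vw (π (S x))).1 (ρ x.1 x.2)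
                  = ∏ k, (vw (π k)).1 (fρ k) := by
                rw [← Equiv.prod_comp S (fun k => (vw (π k)).1 (fρ k))]
                refine Finset.prod_congr rfl (fun x _ => ?_)
                simp [hfρ]
              have e2 : ∏ x : Fin d × Fin n, (vw (π (T x))).2 (σ x.1 x.2)
                  = ∏ k, (vw (π k)).2 (gσ k) := by
                rw [← Equiv.prod_comp T (fun k => (vw (π k)).2 (gσ k))]
                refine Finset.prod_congr rfl (fun x _ => ?_)
                simp [hgσ]
              rw [Finset.prod_mul_distrib, ← e1, ← e2]
              ring
          _ = 0 := by rw [key, mul_zero]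
end Aux

section
open Finset
namespace Aux
variable (n d : ℕ)

def rowPerm (j : Fin d) (σ : Equiv.Perm (Fin n)) : Equiv.Perm (Fin d × Fin n) where
  toFun x := if x.1 = j then (x.1, σ x.2) else x
  invFun x := if x.1 = j then (x.1, σ⁻¹ x.2) else x
  left_inv := by rintro ⟨i, c⟩; by_cases h : i = j <;> simp [h]
  right_inv := by rintro ⟨i, c⟩; by_cases h : i = j <;> simp [h]

@[simp] lemma rowPerm_apply (j : Fin d) (σ : Equiv.Perm (Fin n)) (x : Fin d × Fin n) :
    rowPerm n d j σ x = if x.1 = j then (x.1, σ x.2) else x := rfl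

lemma gfun_rowPerm (U : Filling n d) (j : Fin d) (σ : Equiv.Perm (Fin n))
    (u : Fin (d * n) → Fin n → ℚ) :
    gfun n d ((rowPerm n d j σ).trans U) u = sgnQ σ * gfun n d U u := by
  unfold gfun
  rw [← Finset.prod_erase_mul univ _ (Finset.mem_univ j),
    ← Finset.prod_erase_mul univ _ (Finset.mem_univ j)]
  have h1 : ∀ i ∈ univ.erase j,
      (Matrix.of fun r c : Fin n => u (((rowPerm n d j σ).trans U) (i, c)) r).det
        = (Matrix.of fun r c : Fin n => u (U (i, c)) r).det := by
    intro i hi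
    have hij : i ≠ j := (Finset.mem_erase.mp hi).1
    congr 1
    ext r c
    simp [Equiv.trans_apply, hij]
  rw [Finset.prod_congr rfl h1]
  have h2 : (Matrix.of fun r c : Fin n => u (((rowPerm n d j σ).trans U) (j, c)) r).det
      = sgnQ σ * (Matrix.of fun r c : Fin n => u (U (j, c)) r).det := by
    have : (Matrix.of fun r c : Fin n => u (((rowPerm n d j σ).trans U) (j, c)) r)
        = (Matrix.of fun r c : Fin n => u (U (j, c)) r).submatrix id σ := by
      ext r c
      simp [Equiv.trans_apply]
    rw [this, Matrix.det_permute']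
    simp [sgnQ]
  rw [h2]
  ring

lemma colperm_ker_right (S T : Filling n d) (j : Fin d) (σ : Equiv.Perm (Fin n)) :
    Finsupp.single (S, (rowPerm n d j σ).trans T) (1:ℚ) - sgnQ σ • Finsupp.single (S, T) (1:ℚ)
      ∈ LinearMap.ker (phi n d) := by
  rw [LinearMap.mem_ker, map_sub, map_smul, phi_single, phi_single]
  funext vw
  simp only [Pi.sub_apply, Pi.smul_apply, smul_eq_mul, Pi.zero_apply]
  rw [phiFun_eq, phiFun_eq, gfun_rowPerm]
  ring

lemma colperm_ker_left (S T : Filling n d) (j : Fin d) (σ : Equiv.Perm (Fin n)) :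
    Finsupp.single ((rowPerm n d j σ).trans S, T) (1:ℚ) - sgnQ σ • Finsupp.single (S, T) (1:ℚ)
      ∈ LinearMap.ker (phi n d) := by
  rw [LinearMap.mem_ker, map_sub, map_smul, phi_single, phi_single]
  funext vw
  simp only [Pi.sub_apply, Pi.smul_apply, smul_eq_mul, Pi.zero_apply]
  rw [phiFun_eq, phiFun_eq, gfun_rowPerm]
  ring

end Aux
end

section
open Finset
namespace Aux
variable {n d : ℕ}

/-- The `n+1` cells used in an exchange between the row of `b` and the cell of `a` (in a
filling `U`). -/
def cellE (U : Filling n d) (a b : Fin (d * n)) : Option (Fin n) → Fin d × Fin n :=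
  fun o => o.elim (U.symm a) (fun c => ((U.symm b).1, c))

variable (U : Filling n d) (a b : Fin (d * n))

lemma cellE_inj (hrow : (U.symm a).1 ≠ (U.symm b).1) : Function.Injective (cellE U a b) := by
  rintro (_ | c₁) (_ | c₂) h <;> simp [cellE] at h ⊢
  · exact absurd (congrArg Prod.fst h) hrow
  · exact absurd (congrArg Prod.fst h).symm hrow
  · exact h

def embE (hrow : (U.symm a).1 ≠ (U.symm b).1) : Option (Fin n) ↪ Fin d × Fin n :=
  ⟨cellE U a b, cellE_inj U a b hrow⟩

/-- The permutation of cells induced by a permutation of the `n+1` exchange cells. -/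
def cpE (hrow : (U.symm a).1 ≠ (U.symm b).1) (π : Equiv.Perm (Option (Fin n))) :
    Equiv.Perm (Fin d × Fin n) :=
  Equiv.Perm.viaEmbeddingHom (embE U a b hrow) π

variable (hrow : (U.symm a).1 ≠ (U.symm b).1)

lemma cpE_mul (π ρ : Equiv.Perm (Option (Fin n))) :
    cpE U a b hrow (π * ρ) = cpE U a b hrow π * cpE U a b hrow ρ := map_mul _ _ _

lemma cpE_inv (π : Equiv.Perm (Option (Fin n))) :
    cpE U a b hrow π⁻¹ = (cpE U a b hrow π)⁻¹ := map_inv _ _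

lemma cpE_cell (π : Equiv.Perm (Option (Fin n))) (o : Option (Fin n)) :
    cpE U a b hrow π (cellE U a b o) = cellE U a b (π o) :=
  Equiv.Perm.viaEmbedding_apply π (embE U a b hrow) o

lemma cpE_not_mem (π : Equiv.Perm (Option (Fin n))) (x : Fin d × Fin n)
    (hx : x ∉ Set.range (cellE U a b)) : cpE U a b hrow π x = x :=
  Equiv.Perm.viaEmbedding_apply_of_notMem π (embE U a b hrow) x hx

lemma mem_range_cellE (x : Fin d × Fin n) :
    x ∈ Set.range (cellE U a b) ↔ (x = U.symm a ∨ x.1 = (U.symm b).1) := by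
  constructor
  · rintro ⟨(_ | c), rfl⟩
    · exact Or.inl rfl
    · exact Or.inr rfl
  · rintro (rfl | h)
    · exact ⟨none, rfl⟩
    · exact ⟨some x.2, by simp [cellE, ← h]⟩

lemma cpE_symm_cell (π : Equiv.Perm (Option (Fin n))) (o : Option (Fin n)) :
    (cpE U a b hrow π).symm (cellE U a b o) = cellE U a b (π⁻¹ o) := by
  rw [← Equiv.Perm.inv_def, ← cpE_inv]
  exact cpE_cell U a b hrow π⁻¹ o

lemma cpE_symm_not_mem (π : Equiv.Perm (Option (Fin n))) (x : Fin d × Fin n)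
    (hx : x ∉ Set.range (cellE U a b)) : (cpE U a b hrow π).symm x = x := by
  rw [← Equiv.Perm.inv_def, ← cpE_inv]
  exact cpE_not_mem U a b hrow π⁻¹ x hx

/-- Core vanishing: the sign-weighted sum of `gfun` over all permutations of the `n+1`
exchange cells is zero (an `n+1`-fold alternating expression in `n`-space). -/
lemma sum_perm_gfun_zero (hrow : (U.symm a).1 ≠ (U.symm b).1) (u : Fin (d * n) → Fin n → ℚ) :
    ∑ π : Equiv.Perm (Option (Fin n)),
      sgnQ π * gfun n d ((cpE U a b hrow π).trans U) u = 0 := by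
  classical
  have expand : ∀ π : Equiv.Perm (Option (Fin n)),
      gfun n d ((cpE U a b hrow π).trans U) u
        = ∑ ρ : Fin d → Equiv.Perm (Fin n), (∏ i, sgnQ (ρ i)) *
            ((∏ y ∈ (Finset.univ.map (embE U a b hrow))ᶜ, u (U y) (ρ y.1 y.2)) *
             (∏ o : Option (Fin n),
               u (U (cellE U a b o)) (ρ (cellE U a b (π⁻¹ o)).1 (cellE U a b (π⁻¹ o)).2))) := by
    intro π
    rw [gfun_expand]
    refine Finset.sum_congr rfl (fun ρ _ => ?_)
    congr 1
    -- reindex the product over cells by the cell permutation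
    have h1 : ∏ x : Fin d × Fin n, u ((((cpE U a b hrow π).trans U)) x) (ρ x.1 x.2)
        = ∏ y : Fin d × Fin n,
            u (U y) (ρ ((cpE U a b hrow π).symm y).1 ((cpE U a b hrow π).symm y).2) := by
      rw [← Equiv.prod_comp (cpE U a b hrow π)
        (fun y => u (U y) (ρ ((cpE U a b hrow π).symm y).1 ((cpE U a b hrow π).symm y).2))]
      refine Finset.prod_congr rfl (fun x _ => ?_)
      simp [Equiv.trans_apply]
    rw [h1, ← Finset.prod_mul_prod_compl (Finset.univ.map (embE U a b hrow))]
    rw [mul_comm]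
    congr 1
    · -- complement part: fixed cells
      refine Finset.prod_congr rfl (fun y hy => ?_)
      have hy' : y ∉ Set.range (cellE U a b) := by
        intro hmem
        rw [Finset.mem_compl] at hy
        apply hy
        obtain ⟨o, rfl⟩ := hmem
        exact Finset.mem_map_of_mem _ (Finset.mem_univ o)
      rw [cpE_symm_not_mem U a b hrow π y hy']
    · -- range part
      rw [Finset.prod_map]
      refine Finset.prod_congr rfl (fun o _ => ?_)
      have : (embE U a b hrow) o = cellE U a b o := rfl
      rw [this, cpE_symm_cell]
  rw [Finset.sum_congr rfl (fun π _ => by rw [expand π, Finset.mul_sum])]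
  rw [Finset.sum_comm]
  refine Finset.sum_eq_zero (fun ρ _ => ?_)
  -- pull out constants
  have hrewrite : ∀ π : Equiv.Perm (Option (Fin n)),
      sgnQ π * ((∏ i, sgnQ (ρ i)) *
        ((∏ y ∈ (Finset.univ.map (embE U a b hrow))ᶜ, u (U y) (ρ y.1 y.2)) *
         (∏ o : Option (Fin n),
           u (U (cellE U a b o)) (ρ (cellE U a b (π⁻¹ o)).1 (cellE U a b (π⁻¹ o)).2))))
      = ((∏ i, sgnQ (ρ i)) *
          (∏ y ∈ (Finset.univ.map (embE U a b hrow))ᶜ, u (U y) (ρ y.1 y.2))) *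
        (sgnQ π * ∏ o : Option (Fin n),
           u (U (cellE U a b o)) (ρ (cellE U a b (π⁻¹ o)).1 (cellE U a b (π⁻¹ o)).2)) := by
    intro π; ring
  rw [Finset.sum_congr rfl (fun π _ => hrewrite π), ← Finset.mul_sum]
  -- the remaining sum is a determinant with two equal rows
  have hψ : ¬ Function.Injective
      (fun o : Option (Fin n) => ρ (cellE U a b o).1 (cellE U a b o).2) := by
    intro hinj
    have := Fintype.card_le_of_injective _ hinj
    simp at this
  rw [Function.not_injective_iff] at hψ
  obtain ⟨o₁, o₂, heq, hne⟩ := hψ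
  have key : ∑ π : Equiv.Perm (Option (Fin n)),
      sgnQ π * ∏ o : Option (Fin n),
        u (U (cellE U a b o)) (ρ (cellE U a b (π⁻¹ o)).1 (cellE U a b (π⁻¹ o)).2) = 0 := by
    have hinvsum : ∑ π : Equiv.Perm (Option (Fin n)),
        sgnQ π * ∏ o : Option (Fin n),
          u (U (cellE U a b o)) (ρ (cellE U a b (π⁻¹ o)).1 (cellE U a b (π⁻¹ o)).2)
        = ∑ π : Equiv.Perm (Option (Fin n)),
        sgnQ π * ∏ o : Option (Fin n),
          u (U (cellE U a b o)) (ρ (cellE U a b (π o)).1 (cellE U a b (π o)).2) := by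
      rw [← Equiv.sum_comp (Equiv.inv (Equiv.Perm (Option (Fin n))))
        (fun π => sgnQ π * ∏ o : Option (Fin n),
          u (U (cellE U a b o)) (ρ (cellE U a b (π o)).1 (cellE U a b (π o)).2))]
      refine Finset.sum_congr rfl (fun π _ => ?_)
      simp only [Equiv.inv_apply]
      congr 1
      simp [sgnQ]
    rw [hinvsum]
    have hdet : (Matrix.of (fun x o : Option (Fin n) =>
        u (U (cellE U a b o)) (ρ (cellE U a b x).1 (cellE U a b x).2))).det = 0 := by
      apply Matrix.det_zero_of_row_eq hne
      funext o
      simp only [Matrix.of_apply, heq]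
    rw [Matrix.det_apply'] at hdet
    convert hdet using 2 with π
    rfl
  rw [key, mul_zero]

end Aux
end

section
open Finset
namespace Aux
variable {n d : ℕ} (U : Filling n d) (a b : Fin (d * n))

lemma cellE_none : cellE U a b none = U.symm a := rfl

lemma cellE_some_q : cellE U a b (some (U.symm b).2) = U.symm b := by
  simp [cellE]

lemma cpE_none_fixed (hrow : (U.symm a).1 ≠ (U.symm b).1) (π : Equiv.Perm (Option (Fin n)))
    (hπ : π none = none) :
    ∃ σ : Equiv.Perm (Fin n),
      cpE U a b hrow π = rowPerm n d (U.symm b).1 σ ∧ sgnQ σ = sgnQ π := by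
  have hopt : (Equiv.removeNone π).optionCongr = π := by
    have h := map_equiv_removeNone π
    rwa [hπ, Equiv.swap_self, ← Equiv.Perm.one_def, one_mul] at h
  refine ⟨Equiv.removeNone π, ?_, ?_⟩
  · refine Equiv.ext fun x => ?_
    by_cases hx : x ∈ Set.range (cellE U a b)
    · obtain ⟨o, rfl⟩ := hx
      rw [cpE_cell]
      match o with
      | none =>
        rw [hπ]
        have : (cellE U a b none).1 ≠ (U.symm b).1 := hrow
        simp only [rowPerm_apply, if_neg this]
      | some c =>
        have hπc : π (some c) = some (Equiv.removeNone π c) := by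
          conv_lhs => rw [← hopt]
          simp only [Equiv.optionCongr_apply, Option.map_some]
        rw [hπc]
        simp [cellE, rowPerm_apply]
    · rw [cpE_not_mem U a b hrow π x hx]
      rw [mem_range_cellE] at hx
      push_neg at hx
      simp only [rowPerm_apply, if_neg hx.2]
  · simp only [sgnQ]
    rw [← Equiv.optionCongr_sign (Equiv.removeNone π), hopt]

lemma cpE_swap (hrow : (U.symm a).1 ≠ (U.symm b).1) (o₁ o₂ : Option (Fin n)) :
    cpE U a b hrow (Equiv.swap o₁ o₂)
      = Equiv.swap (cellE U a b o₁) (cellE U a b o₂) := by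
  refine Equiv.ext fun x => ?_
  by_cases hx : x ∈ Set.range (cellE U a b)
  · obtain ⟨o, rfl⟩ := hx
    rw [cpE_cell, Function.Injective.swap_apply (cellE_inj U a b hrow)]
  · rw [cpE_not_mem U a b hrow _ x hx, Equiv.swap_apply_of_ne_of_ne]
    · exact fun h => hx ⟨o₁, h.symm⟩
    · exact fun h => hx ⟨o₂, h.symm⟩

lemma swap_cellE_trans :
    (Equiv.swap (cellE U a b none) (cellE U a b (some (U.symm b).2))).trans U
      = U.trans (Equiv.swap a b) := by
  rw [cellE_none, cellE_some_q]
  ext x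
  simp only [Equiv.trans_apply]
  by_cases hx1 : x = U.symm a
  · rw [hx1, Equiv.swap_apply_left, Equiv.apply_symm_apply, Equiv.apply_symm_apply,
      Equiv.swap_apply_left]
  · by_cases hx2 : x = U.symm b
    · rw [hx2, Equiv.swap_apply_right, Equiv.apply_symm_apply, Equiv.apply_symm_apply,
        Equiv.swap_apply_right]
    · have h1 : U x ≠ a := fun h => hx1 (by rw [← h, Equiv.symm_apply_apply])
      have h2 : U x ≠ b := fun h => hx2 (by rw [← h, Equiv.symm_apply_apply])
      rw [Equiv.swap_apply_of_ne_of_ne hx1 hx2, Equiv.swap_apply_of_ne_of_ne h1 h2]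

end Aux
end

section
open Finset
namespace Aux
variable {n d : ℕ}

lemma exch_right (S T : Filling n d) (a b : Fin (d * n)) (hab : a ≠ b)
    (hS : (S.symm a).1 = (S.symm b).1) (hT : (T.symm a).1 ≠ (T.symm b).1) :
    Finsupp.single (S, T) (1:ℚ) - Finsupp.single (S, T.trans (Equiv.swap a b)) (1:ℚ)
      ∈ MM n d := by
  classical
  have hA : (∑ π : Equiv.Perm (Option (Fin n)),
      sgnQ π • Finsupp.single (S, (cpE T a b hT π).trans T) (1:ℚ))
      ∈ LinearMap.ker (phi n d) := by
    rw [LinearMap.mem_ker, map_sum]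
    have h1 : ∀ π : Equiv.Perm (Option (Fin n)),
        phi n d (sgnQ π • Finsupp.single (S, (cpE T a b hT π).trans T) (1:ℚ))
          = sgnQ π • phiFun n d (S, (cpE T a b hT π).trans T) := by
      intro π; rw [map_smul, phi_single]
    rw [Finset.sum_congr rfl fun π _ => h1 π]
    funext vw
    simp only [Finset.sum_apply, Pi.smul_apply, smul_eq_mul, Pi.zero_apply]
    have h2 : ∀ π : Equiv.Perm (Option (Fin n)),
        phiFun n d (S, (cpE T a b hT π).trans T) vw
          = gfun n d S (fun k => (vw k).1)
            * gfun n d ((cpE T a b hT π).trans T) (fun k => (vw k).2) := fun π => rfl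
    calc ∑ π : Equiv.Perm (Option (Fin n)),
          sgnQ π * phiFun n d (S, (cpE T a b hT π).trans T) vw
        = gfun n d S (fun k => (vw k).1) * ∑ π : Equiv.Perm (Option (Fin n)),
            sgnQ π * gfun n d ((cpE T a b hT π).trans T) (fun k => (vw k).2) := by
          rw [Finset.mul_sum]
          refine Finset.sum_congr rfl fun π _ => ?_
          rw [h2 π]; ring
      _ = 0 := by rw [sum_perm_gfun_zero T a b hT, mul_zero]
  have hterm : ∀ π : Equiv.Perm (Option (Fin n)),
      sgnQ π • Finsupp.single (S, (cpE T a b hT π).trans T) (1:ℚ)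
        - ((if π none = none then (1:ℚ) else 0) • Finsupp.single (S, T) (1:ℚ)
            - (if π none = some (T.symm b).2 then (1:ℚ) else 0)
                • Finsupp.single (S, T.trans (Equiv.swap a b)) (1:ℚ)) ∈ MM n d := by
    intro π
    by_cases hc1 : π none = none
    · obtain ⟨σ, hcp, hsgn⟩ := cpE_none_fixed T a b hT π hc1
      rw [hcp, if_pos hc1, if_neg (by rw [hc1]; exact fun h => by cases h),
        one_smul, zero_smul, sub_zero]
      have hk := colperm_ker_right n d S T (T.symm b).1 σ
      have heq : sgnQ π • Finsupp.single (S, (rowPerm n d (T.symm b).1 σ).trans T) (1:ℚ)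
            - Finsupp.single (S, T) (1:ℚ)
          = sgnQ π • (Finsupp.single (S, (rowPerm n d (T.symm b).1 σ).trans T) (1:ℚ)
              - sgnQ σ • Finsupp.single (S, T) (1:ℚ)) := by
        rw [smul_sub, smul_smul, hsgn, sgnQ_mul_self, one_smul]
      rw [heq]
      exact ker_mem_MM n d (Submodule.smul_mem _ _ hk)
    · by_cases hc2 : π none = some (T.symm b).2
      · set π₂ := Equiv.swap none (some (T.symm b).2) * π with hπ₂def
        have hπ₂ : π₂ none = none := by
          rw [hπ₂def]
          simp [Equiv.Perm.mul_apply, hc2]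
        have hπdec : π = Equiv.swap none (some (T.symm b).2) * π₂ := by
          rw [hπ₂def, ← mul_assoc, Equiv.swap_mul_self, one_mul]
        obtain ⟨σ, hcp₂, hsgn₂⟩ := cpE_none_fixed T a b hT π₂ hπ₂
        have hTπ : (cpE T a b hT π).trans T
            = (rowPerm n d (T.symm b).1 σ).trans (T.trans (Equiv.swap a b)) := by
          conv_lhs => rw [hπdec, cpE_mul]
          refine Equiv.ext fun x => ?_
          have hsw := cpE_swap T a b hT none (some (T.symm b).2)
          have hswt := swap_cellE_trans T a b
          calc ((cpE T a b hT (Equiv.swap none (some (T.symm b).2))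
                  * cpE T a b hT π₂).trans T) x
              = T ((Equiv.swap (cellE T a b none) (cellE T a b (some (T.symm b).2)))
                  ((cpE T a b hT π₂) x)) := by
                rw [Equiv.trans_apply, Equiv.Perm.mul_apply, hsw]
            _ = (T.trans (Equiv.swap a b)) ((cpE T a b hT π₂) x) := by
                rw [← Equiv.trans_apply _ T, hswt]
            _ = ((rowPerm n d (T.symm b).1 σ).trans (T.trans (Equiv.swap a b))) x := by
                rw [hcp₂]; rfl
        rw [hTπ, if_neg hc1, if_pos hc2, zero_smul, zero_sub, sub_neg_eq_add, one_smul]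
        have hk := colperm_ker_right n d S (T.trans (Equiv.swap a b)) (T.symm b).1 σ
        have hsgnσ : sgnQ σ = - sgnQ π := by
          rw [hsgn₂, hπ₂def, sgnQ_mul]
          have hsw1 : sgnQ (Equiv.swap (none : Option (Fin n)) (some (T.symm b).2)) = -1 := by
            simp [sgnQ, Equiv.Perm.sign_swap (by simp : (none : Option (Fin n)) ≠ some (T.symm b).2)]
          rw [hsw1]; ring
        have heq : sgnQ π • Finsupp.single
              (S, (rowPerm n d (T.symm b).1 σ).trans (T.trans (Equiv.swap a b))) (1:ℚ)
            + Finsupp.single (S, T.trans (Equiv.swap a b)) (1:ℚ)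
            = sgnQ π • (Finsupp.single
                (S, (rowPerm n d (T.symm b).1 σ).trans (T.trans (Equiv.swap a b))) (1:ℚ)
                - sgnQ σ • Finsupp.single (S, T.trans (Equiv.swap a b)) (1:ℚ)) := by
          rw [smul_sub, smul_smul, hsgnσ, mul_neg, sgnQ_mul_self, neg_smul, one_smul,
            sub_neg_eq_add]
        rw [heq]
        exact ker_mem_MM n d (Submodule.smul_mem _ _ hk)
      · rw [if_neg hc1, if_neg hc2, zero_smul, zero_smul, sub_zero, sub_zero]
        refine Submodule.smul_mem _ _ (special_mem_MM n d (Or.inr ?_))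
        refine ⟨a, b, hab, hS, ?_⟩
        have hTa : (((cpE T a b hT π).trans T).symm) a = cellE T a b (π⁻¹ none) := by
          rw [Equiv.symm_trans_apply]
          rw [show T.symm a = cellE T a b none from rfl, cpE_symm_cell]
        have hTb : (((cpE T a b hT π).trans T).symm) b
            = cellE T a b (π⁻¹ (some (T.symm b).2)) := by
          rw [Equiv.symm_trans_apply]
          have hq : T.symm b = cellE T a b (some (T.symm b).2) := (cellE_some_q T a b).symm
          conv_lhs => rw [hq]
          rw [cpE_symm_cell]
        obtain ⟨c₀, hc₀⟩ : ∃ c₀, π⁻¹ none = some c₀ := by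
          cases h : π⁻¹ none with
          | none =>
            exfalso
            have h2 := congrArg π h
            rw [← Equiv.Perm.mul_apply, mul_inv_cancel, Equiv.Perm.one_apply] at h2
            exact hc1 h2.symm
          | some c₀ => exact ⟨c₀, rfl⟩
        obtain ⟨c₁, hc₁⟩ : ∃ c₁, π⁻¹ (some (T.symm b).2) = some c₁ := by
          cases h : π⁻¹ (some (T.symm b).2) with
          | none =>
            exfalso
            have h2 := congrArg π h
            rw [← Equiv.Perm.mul_apply, mul_inv_cancel, Equiv.Perm.one_apply] at h2
            exact hc2 h2.symm
          | some c₁ => exact ⟨c₁, rfl⟩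
        rw [hTa, hTb, hc₀, hc₁]
        rfl
  have hsum : (∑ π : Equiv.Perm (Option (Fin n)),
      ((if π none = none then (1:ℚ) else 0) • Finsupp.single (S, T) (1:ℚ)
        - (if π none = some (T.symm b).2 then (1:ℚ) else 0)
            • Finsupp.single (S, T.trans (Equiv.swap a b)) (1:ℚ))) ∈ MM n d := by
    have h3 : ∑ π : Equiv.Perm (Option (Fin n)),
        ((if π none = none then (1:ℚ) else 0) • Finsupp.single (S, T) (1:ℚ)
          - (if π none = some (T.symm b).2 then (1:ℚ) else 0)
              • Finsupp.single (S, T.trans (Equiv.swap a b)) (1:ℚ))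
        = (∑ π : Equiv.Perm (Option (Fin n)),
            sgnQ π • Finsupp.single (S, (cpE T a b hT π).trans T) (1:ℚ))
          - ∑ π : Equiv.Perm (Option (Fin n)),
            (sgnQ π • Finsupp.single (S, (cpE T a b hT π).trans T) (1:ℚ)
              - ((if π none = none then (1:ℚ) else 0) • Finsupp.single (S, T) (1:ℚ)
                - (if π none = some (T.symm b).2 then (1:ℚ) else 0)
                    • Finsupp.single (S, T.trans (Equiv.swap a b)) (1:ℚ))) := by
      rw [← Finset.sum_sub_distrib]
      exact Finset.sum_congr rfl fun π _ => (sub_sub_cancel _ _).symm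
    rw [h3]
    exact Submodule.sub_mem _ (ker_mem_MM n d hA) (Submodule.sum_mem _ fun π _ => hterm π)
  rw [Finset.sum_sub_distrib, ← Finset.sum_smul, ← Finset.sum_smul, Finset.sum_boole,
    Finset.sum_boole] at hsum
  have hcards : (Finset.univ.filter
        (fun π : Equiv.Perm (Option (Fin n)) => π none = some (T.symm b).2)).card
      = (Finset.univ.filter
        (fun π : Equiv.Perm (Option (Fin n)) => π none = none)).card := by
    refine Finset.card_bij' (fun π _ => Equiv.swap none (some (T.symm b).2) * π)
      (fun π _ => Equiv.swap none (some (T.symm b).2) * π) ?_ ?_ ?_ ?_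
    · intro π hπ
      rw [Finset.mem_filter] at hπ ⊢
      refine ⟨Finset.mem_univ _, ?_⟩
      rw [Equiv.Perm.mul_apply, hπ.2, Equiv.swap_apply_right]
    · intro π hπ
      rw [Finset.mem_filter] at hπ ⊢
      refine ⟨Finset.mem_univ _, ?_⟩
      rw [Equiv.Perm.mul_apply, hπ.2, Equiv.swap_apply_left]
    · intro π _
      rw [← mul_assoc, Equiv.swap_mul_self, one_mul]
    · intro π _
      rw [← mul_assoc, Equiv.swap_mul_self, one_mul]
  have hpos : 0 < (Finset.univ.filter
      (fun π : Equiv.Perm (Option (Fin n)) => π none = none)).card :=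
    Finset.card_pos.mpr ⟨1, by simp⟩
  rw [hcards, ← smul_sub] at hsum
  have hc0 : ((Finset.univ.filter
      (fun π : Equiv.Perm (Option (Fin n)) => π none = none)).card : ℚ) ≠ 0 := by
    exact_mod_cast hpos.ne'
  have hfin := Submodule.smul_mem (MM n d) (((Finset.univ.filter
      (fun π : Equiv.Perm (Option (Fin n)) => π none = none)).card : ℚ))⁻¹ hsum
  rwa [inv_smul_smul₀ hc0] at hfin

end Aux
end

section
open Finset
namespace Aux
variable {n d : ℕ}

lemma exch_left (S T : Filling n d) (a b : Fin (d * n)) (hab : a ≠ b)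
    (hT : (T.symm a).1 = (T.symm b).1) (hS : (S.symm a).1 ≠ (S.symm b).1) :
    Finsupp.single (S, T) (1:ℚ) - Finsupp.single (S.trans (Equiv.swap a b), T) (1:ℚ)
      ∈ MM n d := by
  classical
  have hA : (∑ π : Equiv.Perm (Option (Fin n)),
      sgnQ π • Finsupp.single ((cpE S a b hS π).trans S, T) (1:ℚ))
      ∈ LinearMap.ker (phi n d) := by
    rw [LinearMap.mem_ker, map_sum]
    have h1 : ∀ π : Equiv.Perm (Option (Fin n)),
        phi n d (sgnQ π • Finsupp.single ((cpE S a b hS π).trans S, T) (1:ℚ))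
          = sgnQ π • phiFun n d ((cpE S a b hS π).trans S, T) := by
      intro π; rw [map_smul, phi_single]
    rw [Finset.sum_congr rfl fun π _ => h1 π]
    funext vw
    simp only [Finset.sum_apply, Pi.smul_apply, smul_eq_mul, Pi.zero_apply]
    have h2 : ∀ π : Equiv.Perm (Option (Fin n)),
        phiFun n d ((cpE S a b hS π).trans S, T) vw
          = gfun n d ((cpE S a b hS π).trans S) (fun k => (vw k).1)
            * gfun n d T (fun k => (vw k).2) := fun π => rfl
    calc ∑ π : Equiv.Perm (Option (Fin n)),
          sgnQ π * phiFun n d ((cpE S a b hS π).trans S, T) vw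
        = (∑ π : Equiv.Perm (Option (Fin n)),
            sgnQ π * gfun n d ((cpE S a b hS π).trans S) (fun k => (vw k).1))
            * gfun n d T (fun k => (vw k).2) := by
          rw [Finset.sum_mul]
          refine Finset.sum_congr rfl fun π _ => ?_
          rw [h2 π]; ring
      _ = 0 := by rw [sum_perm_gfun_zero S a b hS, zero_mul]
  have hterm : ∀ π : Equiv.Perm (Option (Fin n)),
      sgnQ π • Finsupp.single ((cpE S a b hS π).trans S, T) (1:ℚ)
        - ((if π none = none then (1:ℚ) else 0) • Finsupp.single (S, T) (1:ℚ)
            - (if π none = some (S.symm b).2 then (1:ℚ) else 0)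
                • Finsupp.single (S.trans (Equiv.swap a b), T) (1:ℚ)) ∈ MM n d := by
    intro π
    by_cases hc1 : π none = none
    · obtain ⟨σ, hcp, hsgn⟩ := cpE_none_fixed S a b hS π hc1
      rw [hcp, if_pos hc1, if_neg (by rw [hc1]; exact fun h => by cases h),
        one_smul, zero_smul, sub_zero]
      have hk := colperm_ker_left n d S T (S.symm b).1 σ
      have heq : sgnQ π • Finsupp.single ((rowPerm n d (S.symm b).1 σ).trans S, T) (1:ℚ)
            - Finsupp.single (S, T) (1:ℚ)
          = sgnQ π • (Finsupp.single ((rowPerm n d (S.symm b).1 σ).trans S, T) (1:ℚ)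
              - sgnQ σ • Finsupp.single (S, T) (1:ℚ)) := by
        rw [smul_sub, smul_smul, hsgn, sgnQ_mul_self, one_smul]
      rw [heq]
      exact ker_mem_MM n d (Submodule.smul_mem _ _ hk)
    · by_cases hc2 : π none = some (S.symm b).2
      · set π₂ := Equiv.swap none (some (S.symm b).2) * π with hπ₂def
        have hπ₂ : π₂ none = none := by
          rw [hπ₂def]
          simp [Equiv.Perm.mul_apply, hc2]
        have hπdec : π = Equiv.swap none (some (S.symm b).2) * π₂ := by
          rw [hπ₂def, ← mul_assoc, Equiv.swap_mul_self, one_mul]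
        obtain ⟨σ, hcp₂, hsgn₂⟩ := cpE_none_fixed S a b hS π₂ hπ₂
        have hSπ : (cpE S a b hS π).trans S
            = (rowPerm n d (S.symm b).1 σ).trans (S.trans (Equiv.swap a b)) := by
          conv_lhs => rw [hπdec, cpE_mul]
          refine Equiv.ext fun x => ?_
          have hsw := cpE_swap S a b hS none (some (S.symm b).2)
          have hswt := swap_cellE_trans S a b
          calc ((cpE S a b hS (Equiv.swap none (some (S.symm b).2))
                  * cpE S a b hS π₂).trans S) x
              = S ((Equiv.swap (cellE S a b none) (cellE S a b (some (S.symm b).2)))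
                  ((cpE S a b hS π₂) x)) := by
                rw [Equiv.trans_apply, Equiv.Perm.mul_apply, hsw]
            _ = (S.trans (Equiv.swap a b)) ((cpE S a b hS π₂) x) := by
                rw [← Equiv.trans_apply _ S, hswt]
            _ = ((rowPerm n d (S.symm b).1 σ).trans (S.trans (Equiv.swap a b))) x := by
                rw [hcp₂]; rfl
        rw [hSπ, if_neg hc1, if_pos hc2, zero_smul, zero_sub, sub_neg_eq_add, one_smul]
        have hk := colperm_ker_left n d (S.trans (Equiv.swap a b)) T (S.symm b).1 σ
        have hsgnσ : sgnQ σ = - sgnQ π := by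
          rw [hsgn₂, hπ₂def, sgnQ_mul]
          have hsw1 : sgnQ (Equiv.swap (none : Option (Fin n)) (some (S.symm b).2)) = -1 := by
            simp [sgnQ, Equiv.Perm.sign_swap (by simp : (none : Option (Fin n)) ≠ some (S.symm b).2)]
          rw [hsw1]; ring
        have heq : sgnQ π • Finsupp.single
              ((rowPerm n d (S.symm b).1 σ).trans (S.trans (Equiv.swap a b)), T) (1:ℚ)
            + Finsupp.single (S.trans (Equiv.swap a b), T) (1:ℚ)
            = sgnQ π • (Finsupp.single
                ((rowPerm n d (S.symm b).1 σ).trans (S.trans (Equiv.swap a b)), T) (1:ℚ)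
                - sgnQ σ • Finsupp.single (S.trans (Equiv.swap a b), T) (1:ℚ)) := by
          rw [smul_sub, smul_smul, hsgnσ, mul_neg, sgnQ_mul_self, neg_smul, one_smul,
            sub_neg_eq_add]
        rw [heq]
        exact ker_mem_MM n d (Submodule.smul_mem _ _ hk)
      · rw [if_neg hc1, if_neg hc2, zero_smul, zero_smul, sub_zero, sub_zero]
        refine Submodule.smul_mem _ _ (special_mem_MM n d (Or.inr ?_))
        refine ⟨a, b, hab, ?_, hT⟩
        have hSa : (((cpE S a b hS π).trans S).symm) a = cellE S a b (π⁻¹ none) := by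
          rw [Equiv.symm_trans_apply]
          rw [show S.symm a = cellE S a b none from rfl, cpE_symm_cell]
        have hSb : (((cpE S a b hS π).trans S).symm) b
            = cellE S a b (π⁻¹ (some (S.symm b).2)) := by
          rw [Equiv.symm_trans_apply]
          have hq : S.symm b = cellE S a b (some (S.symm b).2) := (cellE_some_q S a b).symm
          conv_lhs => rw [hq]
          rw [cpE_symm_cell]
        obtain ⟨c₀, hc₀⟩ : ∃ c₀, π⁻¹ none = some c₀ := by
          cases h : π⁻¹ none with
          | none =>
            exfalso
            have h2 := congrArg π h
            rw [← Equiv.Perm.mul_apply, mul_inv_cancel, Equiv.Perm.one_apply] at h2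
            exact hc1 h2.symm
          | some c₀ => exact ⟨c₀, rfl⟩
        obtain ⟨c₁, hc₁⟩ : ∃ c₁, π⁻¹ (some (S.symm b).2) = some c₁ := by
          cases h : π⁻¹ (some (S.symm b).2) with
          | none =>
            exfalso
            have h2 := congrArg π h
            rw [← Equiv.Perm.mul_apply, mul_inv_cancel, Equiv.Perm.one_apply] at h2
            exact hc2 h2.symm
          | some c₁ => exact ⟨c₁, rfl⟩
        rw [hSa, hSb, hc₀, hc₁]
        rfl
  have hsum : (∑ π : Equiv.Perm (Option (Fin n)),
      ((if π none = none then (1:ℚ) else 0) • Finsupp.single (S, T) (1:ℚ)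
        - (if π none = some (S.symm b).2 then (1:ℚ) else 0)
            • Finsupp.single (S.trans (Equiv.swap a b), T) (1:ℚ))) ∈ MM n d := by
    have h3 : ∑ π : Equiv.Perm (Option (Fin n)),
        ((if π none = none then (1:ℚ) else 0) • Finsupp.single (S, T) (1:ℚ)
          - (if π none = some (S.symm b).2 then (1:ℚ) else 0)
              • Finsupp.single (S.trans (Equiv.swap a b), T) (1:ℚ))
        = (∑ π : Equiv.Perm (Option (Fin n)),
            sgnQ π • Finsupp.single ((cpE S a b hS π).trans S, T) (1:ℚ))
          - ∑ π : Equiv.Perm (Option (Fin n)),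
            (sgnQ π • Finsupp.single ((cpE S a b hS π).trans S, T) (1:ℚ)
              - ((if π none = none then (1:ℚ) else 0) • Finsupp.single (S, T) (1:ℚ)
                - (if π none = some (S.symm b).2 then (1:ℚ) else 0)
                    • Finsupp.single (S.trans (Equiv.swap a b), T) (1:ℚ))) := by
      rw [← Finset.sum_sub_distrib]
      exact Finset.sum_congr rfl fun π _ => (sub_sub_cancel _ _).symm
    rw [h3]
    exact Submodule.sub_mem _ (ker_mem_MM n d hA) (Submodule.sum_mem _ fun π _ => hterm π)
  rw [Finset.sum_sub_distrib, ← Finset.sum_smul, ← Finset.sum_smul, Finset.sum_boole,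
    Finset.sum_boole] at hsum
  have hcards : (Finset.univ.filter
        (fun π : Equiv.Perm (Option (Fin n)) => π none = some (S.symm b).2)).card
      = (Finset.univ.filter
        (fun π : Equiv.Perm (Option (Fin n)) => π none = none)).card := by
    refine Finset.card_bij' (fun π _ => Equiv.swap none (some (S.symm b).2) * π)
      (fun π _ => Equiv.swap none (some (S.symm b).2) * π) ?_ ?_ ?_ ?_
    · intro π hπ
      rw [Finset.mem_filter] at hπ ⊢
      refine ⟨Finset.mem_univ _, ?_⟩
      rw [Equiv.Perm.mul_apply, hπ.2, Equiv.swap_apply_right]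
    · intro π hπ
      rw [Finset.mem_filter] at hπ ⊢
      refine ⟨Finset.mem_univ _, ?_⟩
      rw [Equiv.Perm.mul_apply, hπ.2, Equiv.swap_apply_left]
    · intro π _
      rw [← mul_assoc, Equiv.swap_mul_self, one_mul]
    · intro π _
      rw [← mul_assoc, Equiv.swap_mul_self, one_mul]
  have hpos : 0 < (Finset.univ.filter
      (fun π : Equiv.Perm (Option (Fin n)) => π none = none)).card :=
    Finset.card_pos.mpr ⟨1, by simp⟩
  rw [hcards, ← smul_sub] at hsum
  have hc0 : ((Finset.univ.filter
      (fun π : Equiv.Perm (Option (Fin n)) => π none = none)).card : ℚ) ≠ 0 := by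
    exact_mod_cast hpos.ne'
  have hfin := Submodule.smul_mem (MM n d) (((Finset.univ.filter
      (fun π : Equiv.Perm (Option (Fin n)) => π none = none)).card : ℚ))⁻¹ hsum
  rwa [inv_smul_smul₀ hc0] at hfin

end Aux
end

section
open Finset
namespace Aux
variable (n d : ℕ)

/-- Relabeling of pairs of fillings by a permutation of labels. -/
def rl (π : Equiv.Perm (Fin (d * n))) : PSpace n d →ₗ[ℚ] PSpace n d :=
  Finsupp.lmapDomain ℚ ℚ (fun ST => (ST.1.trans π, ST.2.trans π))

lemma rl_single (π : Equiv.Perm (Fin (d * n))) (ST : Filling n d × Filling n d) (c : ℚ) :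
    rl n d π (Finsupp.single ST c) = Finsupp.single (ST.1.trans π, ST.2.trans π) c := by
  simp [rl, Finsupp.mapDomain_single]

/-- Precomposition with a permutation on the function side. -/
def precomp (π : Equiv.Perm (Fin (d * n))) :
    ((Fin (d * n) → (Fin n → ℚ) × (Fin n → ℚ)) → ℚ) →ₗ[ℚ]
      ((Fin (d * n) → (Fin n → ℚ) × (Fin n → ℚ)) → ℚ) where
  toFun f := fun vw => f (vw ∘ π)
  map_add' f g := rfl
  map_smul' c f := rfl

lemma phi_rl (π : Equiv.Perm (Fin (d * n))) (x : PSpace n d) :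
    phi n d (rl n d π x) = precomp n d π (phi n d x) := by
  have h : (phi n d).comp (rl n d π) = (precomp n d π).comp (phi n d) := by
    refine Finsupp.lhom_ext fun ST c => ?_
    simp only [LinearMap.comp_apply, rl_single]
    have h1 : phi n d (Finsupp.single (ST.1.trans π, ST.2.trans π) c)
        = c • phiFun n d (ST.1.trans π, ST.2.trans π) := by
      simp [phi, Finsupp.linearCombination_single]
    have h2 : phi n d (Finsupp.single ST c) = c • phiFun n d ST := by
      simp [phi, Finsupp.linearCombination_single]
    rw [h1, h2]
    funext vw
    simp only [precomp, LinearMap.coe_mk, AddHom.coe_mk, map_smul, Pi.smul_apply, smul_eq_mul]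
    congr 1
  exact LinearMap.congr_fun h x

lemma multi_rl (π : Equiv.Perm (Fin (d * n))) (ST : Filling n d × Filling n d)
    (h : HasMultipleEdge n d ST) :
    HasMultipleEdge n d (ST.1.trans π, ST.2.trans π) := by
  obtain ⟨k, k', hkk, h1, h2⟩ := h
  refine ⟨π k, π k', fun hc => hkk (π.injective hc), ?_, ?_⟩ <;>
    simpa using (by assumption : _)

lemma graph_rl (π : Equiv.Perm (Fin (d * n))) (ST : Filling n d × Filling n d) :
    graphOf n d (ST.1.trans π, ST.2.trans π) = graphOf n d ST := by
  unfold graphOf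
  congr 1
  funext u v
  refine propext ⟨?_, ?_⟩
  · rintro ⟨i, j, h1, h2, k, hk1, hk2⟩
    exact ⟨i, j, h1, h2, π.symm k, by simpa using hk1, by simpa using hk2⟩
  · rintro ⟨i, j, h1, h2, k, hk1, hk2⟩
    refine ⟨i, j, h1, h2, π k, ?_, ?_⟩ <;> simpa using (by assumption : _)

lemma rl_mem_MM (π : Equiv.Perm (Fin (d * n))) {x : PSpace n d} (h : x ∈ MM n d) :
    rl n d π x ∈ MM n d := by
  refine Submodule.span_induction ?_ ?_ ?_ ?_ h
  · rintro y (⟨ST, hsp, rfl⟩ | hker)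
    · rw [rl_single]
      refine special_mem_MM n d ?_
      rcases hsp with hdisc | hmul
      · exact Or.inl (by unfold IsDisconnected; rw [graph_rl]; exact hdisc)
      · exact Or.inr (multi_rl n d π ST hmul)
    · refine ker_mem_MM n d ?_
      rw [LinearMap.mem_ker, phi_rl, LinearMap.mem_ker.mp hker, map_zero]
  · simp
  · intro y z _ _ hy hz
    rw [map_add]; exact Submodule.add_mem _ hy hz
  · intro c y _ hy
    rw [map_smul]; exact Submodule.smul_mem _ _ hy

/-- Writing a label swap inside a common row as a row permutation. -/
lemma trans_swap_eq_rowPerm (U : Filling n d) (x y : Fin (d * n)) (hxy : x ≠ y)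
    (h : (U.symm x).1 = (U.symm y).1) :
    U.trans (Equiv.swap x y)
      = (rowPerm n d (U.symm x).1 (Equiv.swap (U.symm x).2 (U.symm y).2)).trans U := by
  refine Equiv.ext fun z => ?_
  simp only [Equiv.trans_apply, rowPerm_apply]
  by_cases hz1 : z.1 = (U.symm x).1
  · rw [if_pos hz1]
    by_cases hz2 : z.2 = (U.symm x).2
    · have hz : z = U.symm x := Prod.ext hz1 hz2
      have h2 : (z.1, Equiv.swap (U.symm x).2 (U.symm y).2 z.2) = U.symm y := by
        rw [hz2, Equiv.swap_apply_left]
        exact Prod.ext (hz1.trans h) rfl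
      rw [h2, hz, Equiv.apply_symm_apply, Equiv.apply_symm_apply, Equiv.swap_apply_left]
    · by_cases hz3 : z.2 = (U.symm y).2
      · have hz : z = U.symm y := Prod.ext (hz1.trans h) hz3
        have h2 : (z.1, Equiv.swap (U.symm x).2 (U.symm y).2 z.2) = U.symm x := by
          rw [hz3, Equiv.swap_apply_right]
          exact Prod.ext hz1 rfl
        rw [h2, hz, Equiv.apply_symm_apply, Equiv.apply_symm_apply, Equiv.swap_apply_right]
      · have hux : U z ≠ x := fun hc => hz2 (by rw [← hc, Equiv.symm_apply_apply])
        have huy : U z ≠ y := fun hc => hz3 (by rw [← hc, Equiv.symm_apply_apply])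
        rw [Equiv.swap_apply_of_ne_of_ne hz2 hz3, Equiv.swap_apply_of_ne_of_ne hux huy]
  · rw [if_neg hz1]
    have hux : U z ≠ x := fun hc => hz1 (by rw [← hc, Equiv.symm_apply_apply])
    have huy : U z ≠ y := fun hc => hz1 (by rw [h, ← hc, Equiv.symm_apply_apply])
    rw [Equiv.swap_apply_of_ne_of_ne hux huy]

end Aux
end

section
open Finset
namespace Aux
variable {n d : ℕ}

def Pprop (S T : Filling n d) (π : Equiv.Perm (Fin (d * n))) : Prop :=
  Finsupp.single (S.trans π, T.trans π) (1:ℚ) - sgnQ π • Finsupp.single (S, T) (1:ℚ) ∈ MM n d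

lemma Pprop_one (S T : Filling n d) : Pprop S T 1 := by
  unfold Pprop
  have h1 : S.trans (1 : Equiv.Perm (Fin (d * n))) = S := Equiv.ext fun z => rfl
  have h2 : T.trans (1 : Equiv.Perm (Fin (d * n))) = T := Equiv.ext fun z => rfl
  rw [h1, h2, sgnQ_one, one_smul, sub_self]
  exact Submodule.zero_mem _

lemma Pprop_mul (S T : Filling n d) (π ρ : Equiv.Perm (Fin (d * n)))
    (hπ : Pprop S T π) (hρ : Pprop S T ρ) : Pprop S T (π * ρ) := by
  unfold Pprop at hπ hρ ⊢
  have key : (S.trans (π * ρ), T.trans (π * ρ))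
      = ((S.trans ρ).trans π, (T.trans ρ).trans π) := by
    rw [Equiv.Perm.mul_def, ← Equiv.trans_assoc, ← Equiv.trans_assoc]
  have hexp : rl n d π (Finsupp.single (S.trans ρ, T.trans ρ) (1:ℚ)
        - sgnQ ρ • Finsupp.single (S, T) (1:ℚ))
      = Finsupp.single (S.trans (π * ρ), T.trans (π * ρ)) (1:ℚ)
        - sgnQ ρ • Finsupp.single (S.trans π, T.trans π) (1:ℚ) := by
    rw [map_sub, map_smul, rl_single, rl_single, key]
  have hsum := Submodule.add_mem _ (rl_mem_MM n d π hρ) (Submodule.smul_mem _ (sgnQ ρ) hπ)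
  have heq : rl n d π (Finsupp.single (S.trans ρ, T.trans ρ) (1:ℚ)
        - sgnQ ρ • Finsupp.single (S, T) (1:ℚ))
      + sgnQ ρ • (Finsupp.single (S.trans π, T.trans π) (1:ℚ)
        - sgnQ π • Finsupp.single (S, T) (1:ℚ))
      = Finsupp.single (S.trans (π * ρ), T.trans (π * ρ)) (1:ℚ)
        - sgnQ (π * ρ) • Finsupp.single (S, T) (1:ℚ) := by
    rw [hexp, sgnQ_mul, smul_sub, smul_smul, mul_comm (sgnQ ρ) (sgnQ π)]
    abel
  rw [heq] at hsum
  exact hsum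

lemma Pprop_swap_of_rows (S T : Filling n d) (x y : Fin (d * n)) (hxy : x ≠ y)
    (hadj : (S.symm x).1 = (S.symm y).1 ∨ (T.symm x).1 = (T.symm y).1) :
    Pprop S T (Equiv.swap x y) := by
  unfold Pprop
  have hsτ : sgnQ (Equiv.swap x y) = -1 := by
    simp [sgnQ, Equiv.Perm.sign_swap hxy]
  rw [hsτ, neg_smul, one_smul, sub_neg_eq_add]
  by_cases hS : (S.symm x).1 = (S.symm y).1 <;> by_cases hT : (T.symm x).1 = (T.symm y).1
  · -- multiple edge on both sides
    have hm : HasMultipleEdge n d (S, T) := ⟨x, y, hxy, hS, hT⟩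
    have hm' : HasMultipleEdge n d (S.trans (Equiv.swap x y), T.trans (Equiv.swap x y)) :=
      multi_rl n d (Equiv.swap x y) (S, T) hm
    exact Submodule.add_mem _ (special_mem_MM n d (Or.inr hm')) (special_mem_MM n d (Or.inr hm))
  · -- same S-row, different T-rows
    have hα := exch_right S T x y hxy hS hT
    have hβ := trans_swap_eq_rowPerm n d S x y hxy hS
    have hc12 : (S.symm x).2 ≠ (S.symm y).2 :=
      fun hc => hxy (by
        have := S.symm.injective (Prod.ext hS hc)
        exact this)
    have hγ := colperm_ker_left n d S (T.trans (Equiv.swap x y)) (S.symm x).1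
      (Equiv.swap (S.symm x).2 (S.symm y).2)
    have hsc : sgnQ (Equiv.swap (S.symm x).2 (S.symm y).2) = -1 := by
      simp [sgnQ, Equiv.Perm.sign_swap hc12]
    rw [hsc, neg_smul, one_smul, sub_neg_eq_add] at hγ
    rw [hβ]
    have heq : Finsupp.single ((rowPerm n d (S.symm x).1
          (Equiv.swap (S.symm x).2 (S.symm y).2)).trans S, T.trans (Equiv.swap x y)) (1:ℚ)
        + Finsupp.single (S, T) (1:ℚ)
        = (Finsupp.single ((rowPerm n d (S.symm x).1
            (Equiv.swap (S.symm x).2 (S.symm y).2)).trans S, T.trans (Equiv.swap x y)) (1:ℚ)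
          + Finsupp.single (S, T.trans (Equiv.swap x y)) (1:ℚ))
          + (Finsupp.single (S, T) (1:ℚ)
            - Finsupp.single (S, T.trans (Equiv.swap x y)) (1:ℚ)) := by abel
    rw [heq]
    exact Submodule.add_mem _ (ker_mem_MM n d hγ) hα
  · -- same T-row, different S-rows
    have hα := exch_left S T x y hxy hT hS
    have hβ := trans_swap_eq_rowPerm n d T x y hxy hT
    have hc12 : (T.symm x).2 ≠ (T.symm y).2 :=
      fun hc => hxy (by
        have := T.symm.injective (Prod.ext hT hc)
        exact this)
    have hγ := colperm_ker_right n d (S.trans (Equiv.swap x y)) T (T.symm x).1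
      (Equiv.swap (T.symm x).2 (T.symm y).2)
    have hsc : sgnQ (Equiv.swap (T.symm x).2 (T.symm y).2) = -1 := by
      simp [sgnQ, Equiv.Perm.sign_swap hc12]
    rw [hsc, neg_smul, one_smul, sub_neg_eq_add] at hγ
    rw [hβ]
    have heq : Finsupp.single (S.trans (Equiv.swap x y), (rowPerm n d (T.symm x).1
          (Equiv.swap (T.symm x).2 (T.symm y).2)).trans T) (1:ℚ)
        + Finsupp.single (S, T) (1:ℚ)
        = (Finsupp.single (S.trans (Equiv.swap x y), (rowPerm n d (T.symm x).1
            (Equiv.swap (T.symm x).2 (T.symm y).2)).trans T) (1:ℚ)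
          + Finsupp.single (S.trans (Equiv.swap x y), T) (1:ℚ))
          + (Finsupp.single (S, T) (1:ℚ)
            - Finsupp.single (S.trans (Equiv.swap x y), T) (1:ℚ)) := by abel
    rw [heq]
    exact Submodule.add_mem _ (ker_mem_MM n d hγ) hα
  · rcases hadj with h | h
    · exact absurd h hS
    · exact absurd h hT

/-- The relation "the swap of two labels is in `Pprop`". -/
def RelP (S T : Filling n d) (x y : Fin (d * n)) : Prop :=
  x = y ∨ Pprop S T (Equiv.swap x y)

lemma RelP_symm (S T : Filling n d) {x y : Fin (d * n)} (h : RelP S T x y) : RelP S T y x := by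
  rcases h with h | h
  · exact Or.inl h.symm
  · exact Or.inr (by rwa [Equiv.swap_comm])

lemma RelP_trans (S T : Filling n d) {x y z : Fin (d * n)}
    (h1 : RelP S T x y) (h2 : RelP S T y z) : RelP S T x z := by
  rcases h1 with rfl | h1
  · exact h2
  rcases h2 with rfl | h2
  · exact Or.inr h1
  by_cases hxz : x = z
  · exact Or.inl hxz
  by_cases hxy : x = y
  · subst hxy
    exact Or.inr h2
  by_cases hyz : y = z
  · subst hyz
    exact Or.inr h1
  have hprod := Pprop_mul S T _ _ (Pprop_mul S T _ _ h2 h1) h2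
  rw [Equiv.swap_mul_swap_mul_swap hxy hxz] at hprod
  exact Or.inr (by rwa [Equiv.swap_comm] at hprod)

lemma touches_rel (S T : Filling n d) (u : Fin d ⊕ Fin d) (k₁ k₂ : Fin (d * n))
    (h1 : (match u with
      | Sum.inl i => (S.symm k₁).1 = i
      | Sum.inr j => (T.symm k₁).1 = j))
    (h2 : (match u with
      | Sum.inl i => (S.symm k₂).1 = i
      | Sum.inr j => (T.symm k₂).1 = j)) : RelP S T k₁ k₂ := by
  by_cases hk : k₁ = k₂
  · exact Or.inl hk
  · cases u with
    | inl i => exact Or.inr (Pprop_swap_of_rows S T k₁ k₂ hk (Or.inl (h1.trans h2.symm)))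
    | inr j => exact Or.inr (Pprop_swap_of_rows S T k₁ k₂ hk (Or.inr (h1.trans h2.symm)))

end Aux
end

section
open Finset
namespace Aux
variable {n d : ℕ}

def touches (S T : Filling n d) (u : Fin d ⊕ Fin d) (k : Fin (d * n)) : Prop :=
  Sum.elim (fun i => (S.symm k).1 = i) (fun j => (T.symm k).1 = j) u

lemma touches_rel' (S T : Filling n d) (u : Fin d ⊕ Fin d) (k₁ k₂ : Fin (d * n))
    (h1 : touches S T u k₁) (h2 : touches S T u k₂) : RelP S T k₁ k₂ := by
  by_cases hk : k₁ = k₂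
  · exact Or.inl hk
  · cases u with
    | inl i =>
      exact Or.inr (Pprop_swap_of_rows S T k₁ k₂ hk (Or.inl (h1.trans h2.symm)))
    | inr j =>
      exact Or.inr (Pprop_swap_of_rows S T k₁ k₂ hk (Or.inr (h1.trans h2.symm)))

lemma relP_of_walk (S T : Filling n d) {u v : Fin d ⊕ Fin d}
    (w : (graphOf n d (S, T)).Walk u v) :
    ∀ k₁ k₂ : Fin (d * n), touches S T u k₁ → touches S T v k₂ → RelP S T k₁ k₂ := by
  induction w with
  | nil =>
    intro k₁ k₂ h1 h2
    exact touches_rel' S T _ k₁ k₂ h1 h2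
  | @cons u u' v hadj w ih =>
    intro k₁ k₂ h1 h2
    have hadj' : (graphOf n d (S, T)).Adj u u' := hadj
    unfold graphOf at hadj'
    rw [SimpleGraph.fromRel_adj] at hadj'
    obtain ⟨_, hr⟩ := hadj'
    rcases hr with ⟨i, j, rfl, rfl, k, hk1, hk2⟩ | ⟨i, j, rfl, rfl, k, hk1, hk2⟩
    · refine RelP_trans S T (touches_rel' S T (Sum.inl i) k₁ k h1 hk1) ?_
      exact ih k k₂ hk2 h2
    · refine RelP_trans S T (touches_rel' S T (Sum.inr j) k₁ k h1 hk2) ?_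
      exact ih k k₂ hk1 h2

lemma Pprop_all (S T : Filling n d) (hconn : (graphOf n d (S, T)).Connected)
    (π : Equiv.Perm (Fin (d * n))) : Pprop S T π := by
  have hswap : ∀ x y : Fin (d * n), x ≠ y → Pprop S T (Equiv.swap x y) := by
    intro x y hxy
    have h1 : touches S T (Sum.inl (S.symm x).1) x := rfl
    have h2 : touches S T (Sum.inl (S.symm y).1) y := rfl
    obtain ⟨w⟩ := hconn.preconnected (Sum.inl (S.symm x).1) (Sum.inl (S.symm y).1)
    rcases relP_of_walk S T w x y h1 h2 with h | h
    · exact absurd h hxy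
    · exact h
  refine Equiv.Perm.swap_induction_on π (Pprop_one S T) ?_
  intro f x y hxy hf
  exact Pprop_mul S T _ f (hswap x y hxy) hf

lemma connected_mem (hn : 0 < n) (hd : n + 1 ≤ d) (S T : Filling n d)
    (hconn : (graphOf n d (S, T)).Connected) :
    Finsupp.single (S, T) (1:ℚ) ∈ MM n d := by
  have hdn : n * n < d * n := by
    have h1 : n < d := Nat.lt_of_succ_le hd
    exact (Nat.mul_lt_mul_right hn).mpr h1
  have hA := master n d S T hdn
  have hterm : ∀ π : Equiv.Perm (Fin (d * n)),
      sgnQ π • Finsupp.single (S.trans π, T.trans π) (1:ℚ) - Finsupp.single (S, T) (1:ℚ)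
        ∈ MM n d := by
    intro π
    have hp := Pprop_all S T hconn π
    unfold Pprop at hp
    have heq : sgnQ π • (Finsupp.single (S.trans π, T.trans π) (1:ℚ)
          - sgnQ π • Finsupp.single (S, T) (1:ℚ))
        = sgnQ π • Finsupp.single (S.trans π, T.trans π) (1:ℚ)
          - Finsupp.single (S, T) (1:ℚ) := by
      rw [smul_sub, smul_smul, sgnQ_mul_self, one_smul]
    exact heq ▸ Submodule.smul_mem _ _ hp
  have hsum := Submodule.sum_mem (MM n d)
    (fun π (_ : π ∈ (Finset.univ : Finset (Equiv.Perm (Fin (d * n))))) => hterm π)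
  rw [Finset.sum_sub_distrib, Finset.sum_const, Finset.card_univ] at hsum
  have hAmem := ker_mem_MM n d hA
  have hx : (Fintype.card (Equiv.Perm (Fin (d * n)))) • Finsupp.single (S, T) (1:ℚ)
      ∈ MM n d := by
    have hsub := Submodule.sub_mem _ hAmem hsum
    rwa [sub_sub_cancel] at hsub
  rw [← Nat.cast_smul_eq_nsmul ℚ] at hx
  have hne : ((Fintype.card (Equiv.Perm (Fin (d * n)))) : ℚ) ≠ 0 := by
    exact_mod_cast (Fintype.card_ne_zero : Fintype.card (Equiv.Perm (Fin (d * n))) ≠ 0)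
  have hfin := Submodule.smul_mem (MM n d)
    (((Fintype.card (Equiv.Perm (Fin (d * n)))) : ℚ))⁻¹ hx
  rwa [inv_smul_smul₀ hne] at hfin

end Aux
end


/-- If `d ≥ n+1`, then `𝒫` is spanned by `ker φ` together with the basis elements `(S,T)`
that are disconnected or have a multiple edge. -/
theorem stmt2 (n d : ℕ) (hn : 0 < n) (hd : n + 1 ≤ d) :
    Submodule.span ℚ
      ({x : PSpace n d | ∃ ST : Filling n d × Filling n d,
          (IsDisconnected n d ST ∨ HasMultipleEdge n d ST) ∧ x = Finsupp.single ST 1}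
        ∪ (LinearMap.ker (phi n d) : Set (PSpace n d))) = ⊤ := by
  rw [eq_top_iff]
  intro x _
  show x ∈ Aux.MM n d
  refine Finsupp.induction x (Submodule.zero_mem _) ?_
  intro ST c f _ _ ih
  refine Submodule.add_mem _ ?_ ih
  have hsingle : Finsupp.single ST c = c • Finsupp.single ST (1:ℚ) := by
    rw [Finsupp.smul_single, smul_eq_mul, mul_one]
  rw [hsingle]
  refine Submodule.smul_mem _ _ ?_
  by_cases hsp : IsDisconnected n d ST ∨ HasMultipleEdge n d ST
  · exact Aux.special_mem_MM n d hsp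
  · have hconn : (graphOf n d ST).Connected := by
      by_contra hc
      exact hsp (Or.inl hc)
    obtain ⟨S, T⟩ := ST
    exact Aux.connected_mem hn hd S T hconn
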